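/- Consider the labeled graph with K = 2 sources and 13 nodes V1, …, V13 whose edges are exactly: W1-edges {V1,V5}, {V2,V6}, {V3,V5}, {V3,V6}, {V5,V8}, {V6,V8}, {V7,V8}, {V4,V7}, {V11,V12}, and W2-edges {V1,V2}, {V3,V4}, {V5,V9}, {V6,V10}, {V8,V12}, {V7,V13}. Every storage code over this graph with |S| ≥ 2 satisfies |S|³ < |T|⁴; i.e., the symbol rate is strictly below 4/3. -/

import Mathlib

/-- A storage code problem over a labeled graph: `N` nodes, `K` sources, and a
symmetric labeling `t` of pairs of nodes by sources, with no self-loops. -/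
structure LabeledGraph (N K : ℕ) where
  t : Fin N → Fin N → Option (Fin K)
  symm : ∀ i j, t i j = t j i
  irrefl : ∀ i, t i i = none

/-- `V` is a storage code over `G`: from the coded symbols at the two endpoints of
any `W_k`-edge, the source symbol `W_k` can be decoded. -/
def IsStorageCode {N K : ℕ} (G : LabeledGraph N K) (S T : Type)
    (V : Fin N → (Fin K → S) → T) : Prop :=
  ∀ i j k, G.t i j = some k →
    ∃ D : T → T → S, ∀ w : Fin K → S, D (V i w) (V j w) = w k

/-- The set of source labels carried by the edges incident to node `i`. -/
def colorSet {N K : ℕ} (G : LabeledGraph N K) (i : Fin N) : Set (Fin K) :=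
  {k | ∃ j, G.t i j = some k}

/-- Node `i` is `M`-color: its incident edges carry exactly `M` distinct labels. -/
def IsMColor {N K : ℕ} (G : LabeledGraph N K) (i : Fin N) (M : ℕ) : Prop :=
  (colorSet G i).ncard = M

/-- `W_1`-edges (label `0`) of the graph of Fig. 7 (0-indexed nodes). -/
def w1edges : List (ℕ × ℕ) :=
  [(0,4),(1,5),(2,4),(2,5),(4,7),(5,7),(6,7),(3,6),(10,11)]

/-- `W_2`-edges (label `1`) of the graph of Fig. 7 (0-indexed nodes). -/
def w2edges : List (ℕ × ℕ) :=
  [(0,1),(2,3),(4,8),(5,9),(7,11),(6,12)]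

/-- The labeling of the 13-node graph of Fig. 7. -/
def tFig (i j : Fin 13) : Option (Fin 2) :=
  if (i.val, j.val) ∈ w1edges ∨ (j.val, i.val) ∈ w1edges then some 0
  else if (i.val, j.val) ∈ w2edges ∨ (j.val, i.val) ∈ w2edges then some 1
  else none

/-- The 13-node, 2-source labeled graph of Fig. 7. -/
def GFig : LabeledGraph 13 2 := ⟨tFig, by decide, by decide⟩

section AuxLemmas

set_option linter.unusedSectionVars false

open Finset

variable {α β γ : Type*} [Fintype α] [DecidableEq β] [DecidableEq γ]

/-- Number of distinct values of `f` on a finite domain. -/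
noncomputable def cntIm (f : α → β) : ℕ := (Finset.univ.image f).card

lemma exists_factor [Nonempty α] (f : α → β) (g : α → γ)
    (h : ∀ a a', f a = f a' → g a = g a') : ∃ H : β → γ, ∀ a, g a = H (f a) := by
  classical
  refine ⟨fun b => if hb : ∃ a, f a = b then g hb.choose else g (Classical.arbitrary α),
    fun a => ?_⟩
  have hb : ∃ a', f a' = f a := ⟨a, rfl⟩
  simp only [dif_pos hb]
  exact (h hb.choose a hb.choose_spec).symm

lemma cnt_le_of_det (f : α → β) (g : α → γ)
    (h : ∀ a a', f a = f a' → g a = g a') : cntIm g ≤ cntIm f := by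
  classical
  rcases isEmpty_or_nonempty α with hα | hα
  · simp [cntIm, Finset.univ_eq_empty]
  · obtain ⟨H, hH⟩ := exists_factor f g h
    have him : Finset.univ.image g = (Finset.univ.image f).image H := by
      rw [Finset.image_image]
      exact Finset.image_congr (fun a _ => hH a)
    rw [cntIm, cntIm, him]
    exact Finset.card_image_le

lemma det_rev (f : α → β) (g : α → γ)
    (h : ∀ a a', f a = f a' → g a = g a') (hc : cntIm f ≤ cntIm g) :
    ∀ a a', g a = g a' → f a = f a' := by
  classical
  rcases isEmpty_or_nonempty α with hα | hα
  · intro a; exact (hα.false a).elim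
  · obtain ⟨H, hH⟩ := exists_factor f g h
    have him : Finset.univ.image g = (Finset.univ.image f).image H := by
      rw [Finset.image_image]
      exact Finset.image_congr (fun a _ => hH a)
    have hcard : ((Finset.univ.image f).image H).card = (Finset.univ.image f).card := by
      refine le_antisymm Finset.card_image_le ?_
      rw [← him]; exact hc
    have hinj := Finset.injOn_of_card_image_eq hcard
    intro a a' hg
    have h1 : f a ∈ (Finset.univ.image f : Finset β) :=
      Finset.mem_image_of_mem _ (Finset.mem_univ a)
    have h2 : f a' ∈ (Finset.univ.image f : Finset β) :=
      Finset.mem_image_of_mem _ (Finset.mem_univ a')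
    exact hinj h1 h2 (by rw [← hH a, ← hH a', hg])

lemma pair_inj_card (f : α → β) (g : α → γ)
    (h : ∀ a a', f a = f a' → g a = g a' → a = a') :
    Fintype.card α ≤ cntIm f * cntIm g := by
  classical
  have hinj : Function.Injective (fun a => (f a, g a)) := by
    intro a a' e
    exact h a a' (congrArg Prod.fst e) (congrArg Prod.snd e)
  have h1 : Fintype.card α = (Finset.univ.image (fun a => (f a, g a))).card := by
    rw [Finset.card_image_of_injective _ hinj, Finset.card_univ]
  have h2 : Finset.univ.image (fun a => (f a, g a)) ⊆
      (Finset.univ.image f) ×ˢ (Finset.univ.image g) := by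
    intro p hp
    obtain ⟨a, -, rfl⟩ := Finset.mem_image.1 hp
    exact Finset.mem_product.2 ⟨Finset.mem_image_of_mem _ (Finset.mem_univ a),
      Finset.mem_image_of_mem _ (Finset.mem_univ a)⟩
  calc Fintype.card α = _ := h1
    _ ≤ ((Finset.univ.image f) ×ˢ (Finset.univ.image g)).card := Finset.card_le_card h2
    _ = cntIm f * cntIm g := Finset.card_product _ _

lemma combos_le (f : α → β) (g : α → γ)
    (h : ∀ a a', ∃ z, f z = f a ∧ g z = g a') :
    cntIm f * cntIm g ≤ cntIm (fun a => (f a, g a)) := by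
  classical
  have hsub : (Finset.univ.image f) ×ˢ (Finset.univ.image g) ⊆
      Finset.univ.image (fun a => (f a, g a)) := by
    intro p hp
    rw [Finset.mem_product] at hp
    obtain ⟨a, -, ha⟩ := Finset.mem_image.1 hp.1
    obtain ⟨a', -, ha'⟩ := Finset.mem_image.1 hp.2
    obtain ⟨z, hz1, hz2⟩ := h a a'
    refine Finset.mem_image.2 ⟨z, Finset.mem_univ z, ?_⟩
    rw [hz1, hz2, ha, ha']
  calc cntIm f * cntIm g = ((Finset.univ.image f) ×ˢ (Finset.univ.image g)).card :=
        (Finset.card_product _ _).symm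
    _ ≤ _ := Finset.card_le_card hsub

lemma cnt_le_card [Fintype β] (f : α → β) : cntIm f ≤ Fintype.card β :=
  le_trans (Finset.card_le_univ _) (le_of_eq Finset.card_univ)

lemma rowStruct {q : ℕ} (hq : 0 < q) (B : α → β) (C : α → γ)
    (hBC : ∀ a a', B a = B a' → C a = C a' → a = a')
    (hB : cntIm B ≤ q) (hC : cntIm C ≤ q) (hcard : Fintype.card α = q * q) :
    cntIm B = q ∧ cntIm C = q ∧ ∀ a a', ∃ z, B z = B a ∧ C z = C a' := by
  classical
  have hp : q * q ≤ cntIm B * cntIm C := hcard ▸ pair_inj_card B C hBC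
  have hBq : cntIm B = q := by
    refine le_antisymm hB (Nat.le_of_mul_le_mul_right ?_ hq)
    calc q * q ≤ cntIm B * cntIm C := hp
      _ ≤ cntIm B * q := Nat.mul_le_mul_left _ hC
  have hCq : cntIm C = q := by
    refine le_antisymm hC (Nat.le_of_mul_le_mul_left ?_ hq)
    calc q * q ≤ cntIm B * cntIm C := hp
      _ ≤ q * cntIm C := Nat.mul_le_mul_right _ hB
  have hfible : ∀ b ∈ Finset.univ.image B,
      (Finset.univ.filter (fun z => B z = b)).card ≤ q := by
    intro b hb
    have hinj : Set.InjOn C (Finset.univ.filter (fun z => B z = b)) := by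
      intro z hz z' hz' hzz
      simp only [Finset.coe_filter, Set.mem_setOf_eq] at hz hz'
      exact hBC z z' (hz.2.trans hz'.2.symm) hzz
    calc (Finset.univ.filter (fun z => B z = b)).card
        = ((Finset.univ.filter (fun z => B z = b)).image C).card :=
          (Finset.card_image_of_injOn hinj).symm
      _ ≤ (Finset.univ.image C).card := Finset.card_le_card (by
          intro x hx
          obtain ⟨z, -, rfl⟩ := Finset.mem_image.1 hx
          exact Finset.mem_image_of_mem _ (Finset.mem_univ z))
      _ ≤ q := hC
  have hsum : ∑ b ∈ Finset.univ.image B,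
      (Finset.univ.filter (fun z => B z = b)).card = q * q := by
    rw [← Finset.card_eq_sum_card_fiberwise
      (fun x _ => Finset.mem_image_of_mem B (Finset.mem_univ x)), Finset.card_univ, hcard]
  have hfibeq : ∀ b ∈ Finset.univ.image B,
      (Finset.univ.filter (fun z => B z = b)).card = q := by
    intro b hb
    by_contra hne
    have hlt : (Finset.univ.filter (fun z => B z = b)).card < q :=
      lt_of_le_of_ne (hfible b hb) hne
    have : ∑ b ∈ Finset.univ.image B, (Finset.univ.filter (fun z => B z = b)).card
        < ∑ _b ∈ Finset.univ.image B, q :=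
      Finset.sum_lt_sum (fun i hi => hfible i hi) ⟨b, hb, hlt⟩
    rw [hsum, Finset.sum_const, smul_eq_mul] at this
    rw [show (Finset.univ.image B).card = q from hBq] at this
    exact lt_irrefl _ this
  refine ⟨hBq, hCq, fun a a' => ?_⟩
  have hmemB : B a ∈ Finset.univ.image B := Finset.mem_image_of_mem _ (Finset.mem_univ a)
  have hinj : Set.InjOn C (Finset.univ.filter (fun z => B z = B a)) := by
    intro z hz z' hz' hzz
    simp only [Finset.coe_filter, Set.mem_setOf_eq] at hz hz'
    exact hBC z z' (hz.2.trans hz'.2.symm) hzz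
  have himeq : (Finset.univ.filter (fun z => B z = B a)).image C = Finset.univ.image C := by
    refine Finset.eq_of_subset_of_card_le (by
      intro x hx
      obtain ⟨z, -, rfl⟩ := Finset.mem_image.1 hx
      exact Finset.mem_image_of_mem _ (Finset.mem_univ z)) ?_
    rw [Finset.card_image_of_injOn hinj, hfibeq (B a) hmemB]
    exact le_of_eq hCq
  have : C a' ∈ (Finset.univ.filter (fun z => B z = B a)).image C := by
    rw [himeq]; exact Finset.mem_image_of_mem _ (Finset.mem_univ a')
  obtain ⟨z, hz, hzC⟩ := Finset.mem_image.1 this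
  exact ⟨z, (Finset.mem_filter.1 hz).2, hzC⟩

lemma pathFacts {q : ℕ} (hq : 0 < q) (A B C D : α → β)
    (hBC : ∀ a a', B a = B a' → C a = C a' → a = a')
    (hnB : cntIm (fun x => (A x, B x)) = q)
    (hmC : cntIm (fun x => (C x, D x)) = q)
    (hcard : Fintype.card α = q * q) :
    (∀ x x', B x = B x' → A x = A x') ∧ (∀ x x', C x = C x' → D x = D x') ∧
    (∀ x y, ∃ z, B z = B x ∧ C z = C y) ∧ cntIm B = q ∧ cntIm C = q := by
  classical
  have hdB : ∀ x x', (fun x => (A x, B x)) x = (fun x => (A x, B x)) x' → B x = B x' :=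
    fun x x' e => congrArg Prod.snd e
  have hdC : ∀ x x', (fun x => (C x, D x)) x = (fun x => (C x, D x)) x' → C x = C x' :=
    fun x x' e => congrArg Prod.fst e
  have hB : cntIm B ≤ q := hnB ▸ cnt_le_of_det _ B hdB
  have hC : cntIm C ≤ q := hmC ▸ cnt_le_of_det _ C hdC
  obtain ⟨hBq, hCq, hmeet⟩ := rowStruct hq B C hBC hB hC hcard
  have hrevB := det_rev (fun x => (A x, B x)) B hdB (by rw [hnB, hBq])
  have hrevC := det_rev (fun x => (C x, D x)) C hdC (by rw [hmC, hCq])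
  exact ⟨fun x x' h => congrArg Prod.fst (hrevB x x' h),
    fun x x' h => congrArg Prod.snd (hrevC x x' h), hmeet, hBq, hCq⟩


end AuxLemmas

set_option linter.unusedSectionVars false in
open Finset in
lemma keyCount {ι : Type*} [Fintype ι] {s a : ℕ} (hs : 1 ≤ s) (hcard : Fintype.card ι = s)
    (n m : ι → ℕ) (h1 : ∀ r, s ≤ n r * m r)
    (h2 : ∑ r, n r ≤ a) (h3 : ∑ r, m r ≤ a) :
    s ^ 3 ≤ a ^ 2 ∧ (a ^ 2 ≤ s ^ 3 →
      ∃ q, q * q = s ∧ a = s * q ∧ ∀ r, n r = q ∧ m r = q) := by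
  classical
  set N : ι → ℝ := fun r => Real.sqrt (n r) with hN
  set M : ι → ℝ := fun r => Real.sqrt (m r) with hM
  have hN2 : ∀ r, N r ^ 2 = (n r : ℝ) := fun r => Real.sq_sqrt (by positivity)
  have hM2 : ∀ r, M r ^ 2 = (m r : ℝ) := fun r => Real.sq_sqrt (by positivity)
  have hNM : ∀ r, N r * M r = Real.sqrt ((n r : ℝ) * (m r : ℝ)) := fun r =>
    (Real.sqrt_mul (by positivity) _).symm
  have hterm : ∀ r, Real.sqrt (s : ℝ) ≤ N r * M r := by
    intro r
    rw [hNM]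
    apply Real.sqrt_le_sqrt
    exact_mod_cast h1 r
  set X : ℝ := ∑ r, N r * M r with hX
  have hX0 : 0 ≤ X := Finset.sum_nonneg fun r _ =>
    mul_nonneg (Real.sqrt_nonneg _) (Real.sqrt_nonneg _)
  have hconst : ∑ _r : ι, Real.sqrt (s : ℝ) = (s : ℝ) * Real.sqrt (s : ℝ) := by
    rw [Finset.sum_const, nsmul_eq_mul, Finset.card_univ, hcard]
  have hXge : (s : ℝ) * Real.sqrt (s : ℝ) ≤ X := by
    rw [← hconst]
    exact Finset.sum_le_sum fun r _ => hterm r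
  have hCS : X ^ 2 ≤ (∑ r, (n r : ℝ)) * ∑ r, (m r : ℝ) := by
    have h := Finset.sum_mul_sq_le_sq_mul_sq Finset.univ N M
    simp only [hN2, hM2] at h
    exact h
  have hPle : (∑ r, (n r : ℝ)) ≤ (a : ℝ) := by exact_mod_cast h2
  have hQle : (∑ r, (m r : ℝ)) ≤ (a : ℝ) := by exact_mod_cast h3
  have hP0 : (0:ℝ) ≤ ∑ r, (n r : ℝ) := Finset.sum_nonneg fun r _ => by positivity
  have hQ0 : (0:ℝ) ≤ ∑ r, (m r : ℝ) := Finset.sum_nonneg fun r _ => by positivity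
  have ha0 : (0:ℝ) ≤ (a : ℝ) := by positivity
  have hsX2 : ((s : ℝ) * Real.sqrt (s : ℝ)) ^ 2 = (s : ℝ) ^ 3 := by
    rw [mul_pow, Real.sq_sqrt (by positivity : (0:ℝ) ≤ (s:ℝ))]
    ring
  have hmainR : (s : ℝ) ^ 3 ≤ (a : ℝ) ^ 2 := by
    have h1' : ((s : ℝ) * Real.sqrt (s : ℝ)) ^ 2 ≤ X ^ 2 :=
      pow_le_pow_left₀ (by positivity) hXge 2
    have h2' : (∑ r, (n r : ℝ)) * ∑ r, (m r : ℝ) ≤ (a : ℝ) * (a : ℝ) :=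
      mul_le_mul hPle hQle hQ0 ha0
    calc (s : ℝ) ^ 3 = _ := hsX2.symm
      _ ≤ X ^ 2 := h1'
      _ ≤ (∑ r, (n r : ℝ)) * ∑ r, (m r : ℝ) := hCS
      _ ≤ (a : ℝ) * (a : ℝ) := h2'
      _ = (a : ℝ) ^ 2 := (sq (a:ℝ)).symm
  have hmain : s ^ 3 ≤ a ^ 2 := by exact_mod_cast hmainR
  refine ⟨hmain, fun hle => ?_⟩
  have heq : a ^ 2 = s ^ 3 := le_antisymm hle hmain
  have heqR : ((a : ℝ)) ^ 2 = ((s : ℝ)) ^ 3 := by exact_mod_cast heq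
  have ha1 : 1 ≤ a := by
    by_contra h
    have ha' : a = 0 := by omega
    rw [ha'] at heq
    norm_num at heq
    have : 1 ≤ s ^ 3 := Nat.one_le_pow _ _ (by omega)
    omega
  -- s * √s = a
  have hsXa : (s : ℝ) * Real.sqrt (s : ℝ) = (a : ℝ) := by
    have h1' : Real.sqrt (((s : ℝ) * Real.sqrt (s : ℝ)) ^ 2) = (s : ℝ) * Real.sqrt (s : ℝ) :=
      Real.sqrt_sq (by positivity)
    have h2' : Real.sqrt (((a : ℝ)) ^ 2) = (a : ℝ) := Real.sqrt_sq ha0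
    rw [← h1', ← h2', hsX2, ← heqR]
  -- X ≤ a
  have hXle : X ≤ (a : ℝ) := by
    have h1' : X = Real.sqrt (X ^ 2) := (Real.sqrt_sq hX0).symm
    rw [h1']
    calc Real.sqrt (X ^ 2) ≤ Real.sqrt ((a : ℝ) ^ 2) := by
          apply Real.sqrt_le_sqrt
          calc X ^ 2 ≤ (∑ r, (n r : ℝ)) * ∑ r, (m r : ℝ) := hCS
            _ ≤ (a : ℝ) * (a : ℝ) := mul_le_mul hPle hQle hQ0 ha0
            _ = (a : ℝ) ^ 2 := (sq (a:ℝ)).symm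
      _ = (a : ℝ) := Real.sqrt_sq ha0
  have hXeq : X = (a : ℝ) := le_antisymm hXle (hsXa ▸ hXge)
  -- per-term equality: √s = N r * M r
  have hterm_eq : ∀ r : ι, Real.sqrt (s:ℝ) = N r * M r := by
    have hsum_eq : ∑ _r : ι, Real.sqrt (s : ℝ) = ∑ r, N r * M r := by
      rw [hconst, hsXa, ← hXeq]
    have := (Finset.sum_eq_sum_iff_of_le (fun r _ => hterm r)).1 hsum_eq
    intro r; exact this r (Finset.mem_univ r)
  have hnm : ∀ r, n r * m r = s := by
    intro r
    have : ((n r : ℝ)) * (m r : ℝ) = (s : ℝ) := by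
      have e1 : (N r * M r) ^ 2 = (n r : ℝ) * (m r : ℝ) := by
        rw [mul_pow, hN2, hM2]
      rw [← e1, ← hterm_eq r, Real.sq_sqrt (by positivity : (0:ℝ) ≤ (s:ℝ))]
    exact_mod_cast this
  -- products of sums equal a^2, hence each sum = a
  have hprod : (∑ r, n r) * (∑ r, m r) = a * a := by
    have hge : (a : ℝ) * (a:ℝ) ≤ (∑ r, (n r : ℝ)) * ∑ r, (m r : ℝ) := by
      calc (a:ℝ) * (a:ℝ) = (a:ℝ)^2 := (sq (a:ℝ)).symm
        _ = X ^ 2 := by rw [hXeq]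
        _ ≤ _ := hCS
    have hle' : (∑ r, (n r : ℝ)) * ∑ r, (m r : ℝ) ≤ (a:ℝ) * (a:ℝ) :=
      mul_le_mul hPle hQle hQ0 ha0
    have : (∑ r, (n r : ℝ)) * ∑ r, (m r : ℝ) = (a:ℝ) * (a:ℝ) := le_antisymm hle' hge
    exact_mod_cast this
  have hsumn : ∑ r, n r = a := by
    by_contra hne
    have hlt : ∑ r, n r < a := lt_of_le_of_ne h2 hne
    have : (∑ r, n r) * (∑ r, m r) < a * a := by
      calc (∑ r, n r) * (∑ r, m r) ≤ (∑ r, n r) * a := Nat.mul_le_mul_left _ h3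
        _ < a * a := Nat.mul_lt_mul_of_lt_of_le hlt (le_refl a) (by omega)
    omega
  -- n r = m r
  have hterm2 : ∀ r : ι, 2 * Real.sqrt (s:ℝ) ≤ (n r : ℝ) + (m r : ℝ) := by
    intro r
    have h0 : 0 ≤ (N r - M r) ^ 2 := sq_nonneg _
    have : 2 * (N r * M r) ≤ (n r : ℝ) + (m r : ℝ) := by nlinarith [hN2 r, hM2 r]
    calc 2 * Real.sqrt (s:ℝ) = 2 * (N r * M r) := by rw [hterm_eq r]
      _ ≤ _ := this
  have hsum2 : ∑ r, ((n r : ℝ) + (m r : ℝ)) = ∑ _r : ι, 2 * Real.sqrt (s:ℝ) := by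
    have e1 : ∑ _r : ι, 2 * Real.sqrt (s:ℝ) = 2 * ((s:ℝ) * Real.sqrt (s:ℝ)) := by
      rw [Finset.sum_const, nsmul_eq_mul, Finset.card_univ, hcard]; ring
    have e2 : ∑ r, ((n r : ℝ) + (m r : ℝ)) ≤ 2 * ((s:ℝ) * Real.sqrt (s:ℝ)) := by
      rw [Finset.sum_add_distrib, hsXa]
      have : (∑ r, (n r:ℝ)) = (a:ℝ) := by exact_mod_cast hsumn
      rw [this]
      have : (∑ r, (m r:ℝ)) ≤ (a:ℝ) := hQle
      linarith
    have e3 : 2 * ((s:ℝ) * Real.sqrt (s:ℝ)) ≤ ∑ r, ((n r : ℝ) + (m r : ℝ)) := by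
      calc 2 * ((s:ℝ) * Real.sqrt (s:ℝ)) = ∑ _r : ι, 2 * Real.sqrt (s:ℝ) := e1.symm
        _ ≤ _ := Finset.sum_le_sum fun r _ => hterm2 r
    rw [e1]
    exact le_antisymm e2 e3
  have hterm2_eq : ∀ r : ι, 2 * Real.sqrt (s:ℝ) = (n r : ℝ) + (m r : ℝ) := by
    have := (Finset.sum_eq_sum_iff_of_le (fun r _ => hterm2 r)).1 hsum2.symm
    intro r; exact this r (Finset.mem_univ r)
  have hnmeq : ∀ r, n r = m r := by
    intro r
    have h4s : (2 * Real.sqrt (s:ℝ)) ^ 2 = 4 * (s:ℝ) := by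
      rw [mul_pow, Real.sq_sqrt (by positivity : (0:ℝ) ≤ (s:ℝ))]; ring
    have hnmr : ((n r : ℝ)) * (m r : ℝ) = (s:ℝ) := by exact_mod_cast hnm r
    have : ((n r : ℝ) - (m r : ℝ)) ^ 2 = 0 := by
      have := hterm2_eq r
      nlinarith
    have := pow_eq_zero_iff (n := 2) (by norm_num) |>.1 this
    have : (n r : ℝ) = (m r : ℝ) := by linarith [sub_eq_zero.1 this]
    exact_mod_cast this
  -- extract q
  have hne : Nonempty ι := Fintype.card_pos_iff.1 (by omega)
  obtain ⟨r0⟩ := hne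
  have hqq : ∀ r, n r * n r = s := by
    intro r
    have := hnm r
    rwa [← hnmeq r] at this
  have hqconst : ∀ r, n r = n r0 := by
    intro r
    have := congrArg Nat.sqrt ((hqq r).trans (hqq r0).symm)
    rwa [Nat.sqrt_eq, Nat.sqrt_eq] at this
  refine ⟨n r0, hqq r0, ?_, fun r => ⟨hqconst r, ?_⟩⟩
  · have e : ∑ r, n r = s * n r0 := by
      rw [Finset.sum_congr rfl (fun r _ => hqconst r), Finset.sum_const, smul_eq_mul,
        Finset.card_univ, hcard]
    rw [← hsumn, e]
  · rw [← hnmeq r]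
    exact hqconst r

set_option maxHeartbeats 1000000

/-- every storage code over the graph of Fig. 7 with `|S| ≥ 2` satisfies
`|S|³ < |T|⁴`, i.e. symbol rate strictly below `4/3`. -/
theorem fig_graph_rate_lt_four_thirds (S T : Type) [Fintype S] [Fintype T]
    (V : Fin 13 → (Fin 2 → S) → T) (hV : IsStorageCode GFig S T V)
    (hS : 2 ≤ Fintype.card S) :
    Fintype.card S ^ 3 < Fintype.card T ^ 4 := by
  classical
  by_contra hcon
  push_neg at hcon
  set s := Fintype.card S with hsdef
  set t := Fintype.card T with htdef
  have hs1 : 1 ≤ s := by omega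
  have hSne : Nonempty S := Fintype.card_pos_iff.1 (by omega)
  obtain ⟨r0⟩ := hSne
  haveI : Nonempty S := ⟨r0⟩
  set F : Fin 13 → S → S → T := fun i r c => V i ![r, c] with hF
  have ht1 : 1 ≤ t := by
    rw [htdef]
    exact Fintype.card_pos_iff.2 ⟨F 0 r0 r0⟩
  -- decoding facts
  have dec1 : ∀ i j : Fin 13, GFig.t i j = some 0 → ∀ (r c r' c' : S),
      F i r c = F i r' c' → F j r c = F j r' c' → r = r' := by
    intro i j hij r c r' c' e1 e2
    obtain ⟨D, hD⟩ := hV i j 0 hij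
    have h1 := hD ![r, c]
    have h2 := hD ![r', c']
    simp only [Matrix.cons_val_zero] at h1 h2
    rw [← h1, ← h2]
    simp only [hF] at e1 e2
    rw [e1, e2]
  have dec2 : ∀ i j : Fin 13, GFig.t i j = some 1 → ∀ (r c r' c' : S),
      F i r c = F i r' c' → F j r c = F j r' c' → c = c' := by
    intro i j hij r c r' c' e1 e2
    obtain ⟨D, hD⟩ := hV i j 1 hij
    have h1 := hD ![r, c]
    have h2 := hD ![r', c']
    simp only [Matrix.cons_val_one, Matrix.head_cons, Matrix.cons_val_zero] at h1 h2
    rw [← h1, ← h2]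
    simp only [hF] at e1 e2
    rw [e1, e2]
  -- per-path counting and equality structure
  have pathAll : ∀ a b c d : Fin 13, GFig.t a b = some 0 → GFig.t b c = some 1 →
      GFig.t c d = some 0 →
      ∃ q : ℕ, q * q = s ∧ t * t = s * q ∧ ∀ r : S,
        cntIm (fun x => (F a r x, F b r x)) = q ∧ cntIm (fun x => (F c r x, F d r x)) = q := by
    intro a b c d hab hbc hcd
    set P : S → S → T × T := fun r x => (F a r x, F b r x) with hP
    set Q : S → S → T × T := fun r x => (F c r x, F d r x) with hQ
    have hProw : ∀ r x r' x', P r x = P r' x' → r = r' := fun r x r' x' e =>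
      dec1 a b hab r x r' x' (congrArg Prod.fst e) (congrArg Prod.snd e)
    have hQrow : ∀ r x r' x', Q r x = Q r' x' → r = r' := fun r x r' x' e =>
      dec1 c d hcd r x r' x' (congrArg Prod.fst e) (congrArg Prod.snd e)
    have hInj : ∀ (r : S) x x', P r x = P r x' → Q r x = Q r x' → x = x' :=
      fun r x x' e1 e2 =>
        dec2 b c hbc r x r x' (congrArg Prod.snd e1) (congrArg Prod.fst e2)
    have h1 : ∀ r : S, s ≤ cntIm (P r) * cntIm (Q r) := by
      intro r
      have := pair_inj_card (P r) (Q r) (hInj r)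
      rwa [← hsdef] at this
    have hsums : ∀ (R : S → S → T × T), (∀ r x r' x', R r x = R r' x' → r = r') →
        ∑ r : S, cntIm (R r) ≤ t * t := by
      intro R hR
      have hdisj : ∀ x ∈ (Finset.univ : Finset S), ∀ y ∈ (Finset.univ : Finset S), x ≠ y →
          Disjoint (Finset.univ.image (R x)) (Finset.univ.image (R y)) := by
        intro x _ y _ hxy
        rw [Finset.disjoint_left]
        intro v hvx hvy
        obtain ⟨w, -, hw⟩ := Finset.mem_image.1 hvx
        obtain ⟨w', -, hw'⟩ := Finset.mem_image.1 hvy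
        exact hxy (hR x w y w' (hw.trans hw'.symm))
      calc ∑ r : S, cntIm (R r)
          = (Finset.univ.biUnion (fun r => Finset.univ.image (R r))).card :=
            (Finset.card_biUnion hdisj).symm
        _ ≤ (Finset.univ : Finset (T × T)).card := Finset.card_le_univ _
        _ = t * t := by rw [Finset.card_univ, Fintype.card_prod]
    obtain ⟨hmain, hrest⟩ := keyCount hs1 rfl (fun r => cntIm (P r)) (fun r => cntIm (Q r))
      h1 (hsums P hProw) (hsums Q hQrow)
    have heq : (t * t) ^ 2 ≤ s ^ 3 := by
      calc (t * t) ^ 2 = t ^ 4 := by ring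
        _ ≤ s ^ 3 := hcon
    obtain ⟨q, hq1, hq2, hq3⟩ := hrest heq
    exact ⟨q, hq1, hq2, fun r => hq3 r⟩
  -- gather the six paths
  obtain ⟨q, hqs, hqt, hp1⟩ := pathAll 4 0 1 5 (by decide) (by decide) (by decide)
  have hq0 : 0 < q := by
    rcases Nat.eq_zero_or_pos q with h | h
    · exfalso; rw [h] at hqs; omega
    · exact h
  have hcardq : Fintype.card S = q * q := by rw [← hsdef, ← hqs]
  have unify : ∀ q' : ℕ, q' * q' = s → q' = q := by
    intro q' h
    have := congrArg Nat.sqrt (h.trans hqs.symm)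
    rwa [Nat.sqrt_eq, Nat.sqrt_eq] at this
  obtain ⟨q2, hqs2, -, hp2⟩ := pathAll 4 2 3 6 (by decide) (by decide) (by decide)
  rw [unify q2 hqs2] at hp2
  obtain ⟨q3, hqs3, -, hp2'⟩ := pathAll 5 2 3 6 (by decide) (by decide) (by decide)
  rw [unify q3 hqs3] at hp2'
  obtain ⟨q4, hqs4, -, hp3⟩ := pathAll 4 7 11 10 (by decide) (by decide) (by decide)
  rw [unify q4 hqs4] at hp3
  obtain ⟨q5, hqs5, -, hp3'⟩ := pathAll 5 7 11 10 (by decide) (by decide) (by decide)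
  rw [unify q5 hqs5] at hp3'
  obtain ⟨q6, hqs6, -, hp3''⟩ := pathAll 6 7 11 10 (by decide) (by decide) (by decide)
  rw [unify q6 hqs6] at hp3''
  -- work within the row r0
  obtain ⟨d04, d15, meet01, -, -⟩ := pathFacts hq0 (F 4 r0) (F 0 r0) (F 1 r0) (F 5 r0)
    (fun x x' => dec2 0 1 (by decide) r0 x r0 x') (hp1 r0).1 (hp1 r0).2 hcardq
  obtain ⟨d24, d36, meet23, hcnt2, -⟩ := pathFacts hq0 (F 4 r0) (F 2 r0) (F 3 r0) (F 6 r0)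
    (fun x x' => dec2 2 3 (by decide) r0 x r0 x') (hp2 r0).1 (hp2 r0).2 hcardq
  obtain ⟨d25, -, -, -, -⟩ := pathFacts hq0 (F 5 r0) (F 2 r0) (F 3 r0) (F 6 r0)
    (fun x x' => dec2 2 3 (by decide) r0 x r0 x') (hp2' r0).1 (hp2' r0).2 hcardq
  obtain ⟨d74, -, -, hcnt7, -⟩ := pathFacts hq0 (F 4 r0) (F 7 r0) (F 11 r0) (F 10 r0)
    (fun x x' => dec2 7 11 (by decide) r0 x r0 x') (hp3 r0).1 (hp3 r0).2 hcardq
  obtain ⟨d75, -, -, -, -⟩ := pathFacts hq0 (F 5 r0) (F 7 r0) (F 11 r0) (F 10 r0)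
    (fun x x' => dec2 7 11 (by decide) r0 x r0 x') (hp3' r0).1 (hp3' r0).2 hcardq
  obtain ⟨d76, -, -, -, -⟩ := pathFacts hq0 (F 6 r0) (F 7 r0) (F 11 r0) (F 10 r0)
    (fun x x' => dec2 7 11 (by decide) r0 x r0 x') (hp3'' r0).1 (hp3'' r0).2 hcardq
  -- the pair (V4, V5) within row r0
  set pair45 : S → T × T := fun x => (F 4 r0 x, F 5 r0 x) with hpair45
  have h7pair : ∀ x x', F 7 r0 x = F 7 r0 x' → pair45 x = pair45 x' := by
    intro x x' h
    simp only [hpair45]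
    rw [d74 x x' h, d75 x x' h]
  have hcntPair_le : cntIm pair45 ≤ q := hcnt7 ▸ cnt_le_of_det (F 7 r0) pair45 h7pair
  have hcombo : ∀ x y, ∃ z, F 4 r0 z = F 4 r0 x ∧ F 5 r0 z = F 5 r0 y := by
    intro x y
    obtain ⟨z, hz0, hz1⟩ := meet01 x y
    exact ⟨z, d04 z x hz0, d15 z y hz1⟩
  have hklle : cntIm (F 4 r0) * cntIm (F 5 r0) ≤ cntIm pair45 :=
    combos_le (F 4 r0) (F 5 r0) hcombo
  -- pendant bounds
  have hk : s ≤ cntIm (F 4 r0) * t := by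
    have h8 : ∀ x x', F 4 r0 x = F 4 r0 x' → F 8 r0 x = F 8 r0 x' → x = x' :=
      fun x x' => dec2 4 8 (by decide) r0 x r0 x'
    calc s = Fintype.card S := hsdef
      _ ≤ cntIm (F 4 r0) * cntIm (F 8 r0) := pair_inj_card _ _ h8
      _ ≤ cntIm (F 4 r0) * t := Nat.mul_le_mul_left _ (cnt_le_card _)
  have hl : s ≤ cntIm (F 5 r0) * t := by
    have h9 : ∀ x x', F 5 r0 x = F 5 r0 x' → F 9 r0 x = F 9 r0 x' → x = x' :=
      fun x x' => dec2 5 9 (by decide) r0 x r0 x'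
    calc s = Fintype.card S := hsdef
      _ ≤ cntIm (F 5 r0) * cntIm (F 9 r0) := pair_inj_card _ _ h9
      _ ≤ cntIm (F 5 r0) * t := Nat.mul_le_mul_left _ (cnt_le_card _)
  -- force cnt4 * cnt5 = q
  have h10 : s * s ≤ (cntIm (F 4 r0) * cntIm (F 5 r0)) * (t * t) := by
    calc s * s ≤ (cntIm (F 4 r0) * t) * (cntIm (F 5 r0) * t) := Nat.mul_le_mul hk hl
      _ = (cntIm (F 4 r0) * cntIm (F 5 r0)) * (t * t) := by ring
  have h12 : q * (t * t) = s * s := by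
    calc q * (t * t) = q * (s * q) := by rw [hqt]
      _ = s * (q * q) := by ring
      _ = s * s := by rw [hqs]
  have h11 : (cntIm (F 4 r0) * cntIm (F 5 r0)) * (t * t) ≤ q * (t * t) :=
    Nat.mul_le_mul_right _ (le_trans hklle hcntPair_le)
  have hklq : cntIm (F 4 r0) * cntIm (F 5 r0) = q := by
    have he : (cntIm (F 4 r0) * cntIm (F 5 r0)) * (t * t) = q * (t * t) :=
      le_antisymm h11 (by rw [h12]; exact h10)
    exact Nat.eq_of_mul_eq_mul_right (Nat.mul_pos (by omega) (by omega)) he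
  have hpairq : cntIm pair45 = q := le_antisymm hcntPair_le (hklq ▸ hklle)
  -- pair45 determines F7, so F2 determines F7
  have hrev7 : ∀ x x', pair45 x = pair45 x' → F 7 r0 x = F 7 r0 x' :=
    det_rev (F 7 r0) pair45 h7pair (by rw [hcnt7, hpairq])
  have d27 : ∀ x x', F 2 r0 x = F 2 r0 x' → F 7 r0 x = F 7 r0 x' := by
    intro x x' h
    apply hrev7
    simp only [hpair45]
    rw [d24 x x' h, d25 x x' h]
  -- every V7-fiber meets every V3-fiber
  have meets73 : ∀ x y, ∃ z, F 7 r0 z = F 7 r0 x ∧ F 3 r0 z = F 3 r0 y := by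
    intro x y
    obtain ⟨z, hz2, hz3⟩ := meet23 x y
    exact ⟨z, d27 z x hz2, hz3⟩
  -- V6 is constant on the row
  have h6const : ∀ x y, F 6 r0 x = F 6 r0 y := by
    intro x y
    obtain ⟨z, hz7, hz3⟩ := meets73 x y
    exact (d76 z x hz7).symm.trans (d36 z y hz3)
  -- pendant at 6 forces s ≤ t
  have h12inj : ∀ x x', F 12 r0 x = F 12 r0 x' → x = x' :=
    fun x x' h => dec2 6 12 (by decide) r0 x r0 x' (h6const x x') h
  have hst : s ≤ t := by
    rw [hsdef, htdef]
    exact Fintype.card_le_of_injective (F 12 r0) (fun x x' => h12inj x x')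
  -- final contradiction
  have hss : s * s ≤ s * q := by
    calc s * s ≤ t * t := Nat.mul_le_mul hst hst
      _ = s * q := hqt
  have hsq : s ≤ q := Nat.le_of_mul_le_mul_left hss (by omega)
  have hqs' : q ≤ s := by
    calc q ≤ q * q := Nat.le_mul_of_pos_left q hq0
      _ = s := hqs
  have : q = s := le_antisymm hqs' hsq
  rw [this] at hqs
  -- hqs : s * s = s
  have h1s : s * s = s * 1 := by omega
  have := Nat.eq_of_mul_eq_mul_left (show 0 < s by omega) h1s
  omega
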